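/- With the piecewise frequency model above and t_nadir = t_D + ΔP/p_rr (the time when the derivative vanishes), the frequency drop is f_0 − f_nadir = (1/M)·(ΔP·(t_D − t_0) + ΔP²/(2 p_rr)). In particular, the frequency drop is strictly increasing in ΔP (for ΔP > 0, p_rr > 0, M > 0, t_D ≥ t_0). -/

import Mathlib

open intervalIntegral

theorem frequency_drop_at_nadir_and_monotone
    (ΔP prr M t0 tD : ℝ)
    (hΔP : 0 < ΔP) (hprr : 0 < prr) (hM : 0 < M) (htD : t0 ≤ tD) :
    (∫ t in t0..(tD + ΔP / prr), (ΔP - prr * max (t - tD) 0) / M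
        = (1 / M) * (ΔP * (tD - t0) + ΔP ^ 2 / (2 * prr))) ∧
      StrictMonoOn (fun x : ℝ => (1 / M) * (x * (tD - t0) + x ^ 2 / (2 * prr)))
        (Set.Ioi 0) := by
  have hs : 0 < ΔP / prr := div_pos hΔP hprr
  constructor
  · have hint : ∀ a b : ℝ, IntervalIntegrable
        (fun t => (ΔP - prr * max (t - tD) 0) / M) MeasureTheory.volume a b := by
      intro a b
      apply Continuous.intervalIntegrable
      fun_prop
    have hsplit := intervalIntegral.integral_add_adjacent_intervals
      (hint t0 tD) (hint tD (tD + ΔP / prr))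
    rw [← hsplit]
    have h1 : (∫ t in t0..tD, (ΔP - prr * max (t - tD) 0) / M)
        = ΔP / M * (tD - t0) := by
      rw [intervalIntegral.integral_congr (g := fun _ => ΔP / M)]
      · rw [intervalIntegral.integral_const, smul_eq_mul]; ring
      · intro t ht
        rw [Set.uIcc_of_le htD] at ht
        have : t - tD ≤ 0 := by linarith [ht.2]
        simp [max_eq_right this]
    have h2 : (∫ t in tD..(tD + ΔP / prr), (ΔP - prr * max (t - tD) 0) / M)
        = ΔP ^ 2 / (2 * prr) / M := by
      rw [intervalIntegral.integral_congr (g := fun t => (ΔP - prr * (t - tD)) / M)]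
      · have : ∀ t : ℝ, (ΔP - prr * (t - tD)) / M
            = (ΔP + prr * tD) / M - (prr / M) * t := by
          intro t; field_simp; ring
        simp_rw [this]
        have e1 : (∫ x in tD..(tD + ΔP / prr), ((ΔP + prr * tD) / M - (prr / M) * x))
            = (ΔP + prr * tD) / M * (ΔP / prr) - prr / M * (((tD + ΔP / prr)^2 - tD^2)/2) := by
          rw [intervalIntegral.integral_sub intervalIntegrable_const
            (show IntervalIntegrable (fun x : ℝ => prr / M * x) MeasureTheory.volume tD (tD + ΔP / prr)
              from (continuous_const.mul continuous_id').intervalIntegrable _ _),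
            intervalIntegral.integral_const, intervalIntegral.integral_const_mul,
            integral_id]
          simp [smul_eq_mul]
          ring
        rw [e1]
        have hprr' : prr ≠ 0 := ne_of_gt hprr
        have hM' : M ≠ 0 := ne_of_gt hM
        field_simp
        ring
      · intro t ht
        rw [Set.uIcc_of_le (by linarith)] at ht
        have : 0 ≤ t - tD := by linarith [ht.1]
        simp [max_eq_left this]
    rw [h1, h2]
    field_simp
  · intro a ha b hb hab
    simp only [Set.mem_Ioi] at ha hb
    have h1 : 0 < (1:ℝ) / M := by positivity
    apply mul_lt_mul_of_pos_left _ h1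
    have hsq : a ^ 2 < b ^ 2 := by nlinarith
    have : a * (tD - t0) ≤ b * (tD - t0) :=
      mul_le_mul_of_nonneg_right hab.le (by linarith)
    have h2prr : 0 < 2 * prr := by linarith
    have hdiv : a ^ 2 / (2 * prr) < b ^ 2 / (2 * prr) :=
      div_lt_div_of_pos_right hsq h2prr
    exact add_lt_add_of_le_of_lt this hdiv
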